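/- For every g ∈ H_n, the number of distinct infinite orbits of g on X_n is finite and equals (1/2)·∑_{i=1}^n |t_i(g)|. -/

import Mathlib

namespace HoughtonPaper

/-- The set `X_n = {1,…,n} × ℕ` (rays indexed by `Fin n`). -/
abbrev X (n : ℕ) := Fin n × ℕ

/-- `g` acts as the translation by `t i` on the ray `i` from the point `z` on. -/
def EvTransFrom {n : ℕ} (g : Equiv.Perm (X n)) (t : Fin n → ℤ) (z : ℕ) : Prop :=
  ∀ (i : Fin n) (m : ℕ), z ≤ m →
    (g (i, m)).1 = i ∧ ((g (i, m)).2 : ℤ) = (m : ℤ) + t i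

/-- `g` is eventually a translation with translation vector `t`. -/
def EvTrans {n : ℕ} (g : Equiv.Perm (X n)) (t : Fin n → ℤ) : Prop :=
  ∃ z : ℕ, EvTransFrom g t z

/-- Membership in Houghton's group `H_n`. -/
def InH {n : ℕ} (g : Equiv.Perm (X n)) : Prop :=
  ∃ t : Fin n → ℤ, EvTrans g t

/-- Support of a permutation. -/
def supp {α : Type*} (g : Equiv.Perm α) : Set α := {x | g x ≠ x}

/-- Membership in `FSym(X_n)`, the finitely supported permutations. -/
def InFSym {n : ℕ} (g : Equiv.Perm (X n)) : Prop := (supp g).Finite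

/-- Two sets are almost equal if their symmetric difference is finite. -/
def AlmostEq {α : Type*} (A B : Set α) : Prop := (symmDiff A B).Finite

/-- The set `X_{i,r}(g) = {(i,m) : m ≡ r mod |t_i(g)|}`, for `t` the translation vector. -/
def Xir {n : ℕ} (i : Fin n) (t : Fin n → ℤ) (r : ℕ) : Set (X n) :=
  {p : X n | p.1 = i ∧ p.2 % (t i).natAbs = r}

/-- Forward orbit `{(i,m)g^k : k ≥ 0}`. -/
def fwdOrbit {n : ℕ} (g : Equiv.Perm (X n)) (p : X n) : Set (X n) :=
  Set.range fun k : ℕ => (g ^ k) p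

/-- The orbit `{x g^k : k ∈ ℤ}`. -/
def orbit {n : ℕ} (g : Equiv.Perm (X n)) (p : X n) : Set (X n) :=
  Set.range fun k : ℤ => (g ^ k) p

/-- `A` is an infinite orbit of `g`. -/
def IsInfOrbit {n : ℕ} (g : Equiv.Perm (X n)) (A : Set (X n)) : Prop :=
  (∃ p : X n, A = orbit g p) ∧ A.Infinite

/-- The generating relation of `∼_g`: some infinite orbit of `g` is almost equal
to `X_{i,r}(g) ∪ X_{j,s}(g)`. -/
def BaseRel {n : ℕ} (g : Equiv.Perm (X n)) (t : Fin n → ℤ) (i j : Fin n) : Prop :=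
  ∃ r s : ℕ, r < (t i).natAbs ∧ s < (t j).natAbs ∧
    ∃ A : Set (X n), IsInfOrbit g A ∧ AlmostEq A (Xir i t r ∪ Xir j t s)

/-- The equivalence relation `∼_g` on the rays, generated by `BaseRel`. -/
def SimRel {n : ℕ} (g : Equiv.Perm (X n)) (t : Fin n → ℤ) : Fin n → Fin n → Prop :=
  Relation.EqvGen (BaseRel g t)

def genFun {n : ℕ} [NeZero n] (i : Fin n) : X n → X n :=
  fun p =>
    if p.1 = 0 then ((0 : Fin n), p.2 + 1)
    else if p.1 = i then (if p.2 = 0 then ((0 : Fin n), 0) else (i, p.2 - 1))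
    else p

def genInvFun {n : ℕ} [NeZero n] (i : Fin n) : X n → X n :=
  fun p =>
    if p.1 = 0 then (if p.2 = 0 then (i, 0) else ((0 : Fin n), p.2 - 1))
    else if p.1 = i then (i, p.2 + 1)
    else p

/-- The generator `g_i` of Houghton's group (ray `1` of the paper is ray `0` here). -/
def gen {n : ℕ} [NeZero n] (i : Fin n) (hi : i ≠ 0) : Equiv.Perm (X n) where
  toFun := genFun i
  invFun := genInvFun i
  left_inv := by
    rintro ⟨j, m⟩
    by_cases hj : j = 0
    · subst hj
      simp [genFun, genInvFun]
    · by_cases hji : j = i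
      · subst hji
        rcases Nat.eq_zero_or_pos m with hm | hm
        · subst hm; simp [genFun, genInvFun, hi]
        · simp [genFun, genInvFun, hi, hm.ne', Nat.sub_add_cancel hm]
      · simp [genFun, genInvFun, hj, hji]
  right_inv := by
    rintro ⟨j, m⟩
    by_cases hj : j = 0
    · subst hj
      rcases Nat.eq_zero_or_pos m with hm | hm
      · subst hm; simp [genFun, genInvFun, hi]
      · simp [genFun, genInvFun, hm.ne', hi.symm, Nat.sub_add_cancel hm]
    · by_cases hji : j = i
      · subst hji
        simp [genFun, genInvFun, hj]
      · simp [genFun, genInvFun, hj, hji]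

/-- The transposition `τ` exchanging `(1,0)` and `(2,0)` (here `(0,0)` and `(1,0)`). -/
def tau (n : ℕ) [NeZero n] : Equiv.Perm (X n) :=
  Equiv.swap ((0 : Fin n), 0) ((1 : Fin n), 0)

/-- Letters of the alphabet `{g_2,…,g_n}^{±1}`. -/
abbrev Letter (n : ℕ) [NeZero n] := {i : Fin n // i ≠ 0} × Bool

/-- Words over `{g_2,…,g_n}^{±1}`. -/
abbrev Word (n : ℕ) [NeZero n] := List (Letter n)

def evalLetter {n : ℕ} [NeZero n] (l : Letter n) : Equiv.Perm (X n) :=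
  if l.2 then gen l.1.1 l.1.2 else (gen l.1.1 l.1.2)⁻¹

/-- The element of `Sym(X_n)` represented by a word. -/
def wordProd {n : ℕ} [NeZero n] (w : Word n) : Equiv.Perm (X n) :=
  (w.map evalLetter).prod

end HoughtonPaper

open HoughtonPaper

namespace HoughtonAux

open HoughtonPaper

variable {n : ℕ}

lemma mem_orbit_self {g : Equiv.Perm (X n)} (p : X n) : p ∈ orbit g p :=
  ⟨0, by simp⟩

lemma orbit_eq_of_mem {g : Equiv.Perm (X n)} {p q : X n} (h : q ∈ orbit g p) :
    orbit g q = orbit g p := by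
  obtain ⟨k, rfl⟩ := h
  ext x
  constructor
  · rintro ⟨j, rfl⟩
    refine ⟨j + k, ?_⟩
    show (g ^ (j + k)) p = (g ^ j) ((g ^ k) p)
    rw [zpow_add, Equiv.Perm.mul_apply]
  · rintro ⟨j, rfl⟩
    refine ⟨j - k, ?_⟩
    show (g ^ (j - k)) ((g ^ k) p) = (g ^ j) p
    rw [← Equiv.Perm.mul_apply, ← zpow_add, sub_add_cancel]

lemma apply_eq {g : Equiv.Perm (X n)} {t : Fin n → ℤ} {z : ℕ}
    (h : EvTransFrom g t z) {i : Fin n} {m : ℕ} (hm : z ≤ m) (hpos : 0 ≤ t i) :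
    g (i, m) = (i, m + (t i).toNat) := by
  obtain ⟨h1, h2⟩ := h i m hm
  refine Prod.ext h1 ?_
  have : ((g (i, m)).2 : ℤ) = ((m + (t i).toNat : ℕ) : ℤ) := by push_cast; omega
  exact_mod_cast this

lemma pow_apply {g : Equiv.Perm (X n)} {t : Fin n → ℤ} {z : ℕ}
    (h : EvTransFrom g t z) {i : Fin n} (hpos : 0 < t i) {m : ℕ} (hm : z ≤ m) (k : ℕ) :
    (g ^ k) (i, m) = (i, m + k * (t i).toNat) := by
  induction k with
  | zero => simp
  | succ k ih =>
    have h1 : (g ^ (k + 1)) (i, m) = g ((g ^ k) (i, m)) := by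
      rw [pow_succ', Equiv.Perm.mul_apply]
    rw [h1, ih, apply_eq h (by omega) hpos.le]
    have : m + k * (t i).toNat + (t i).toNat = m + (k + 1) * (t i).toNat := by ring
    rw [this]

lemma mem_orbit_mod {g : Equiv.Perm (X n)} {t : Fin n → ℤ} {z : ℕ}
    (h : EvTransFrom g t z) {i : Fin n} (hti : 0 < t i) {m : ℕ} (hm : z ≤ m) :
    (i, m) ∈ orbit g (i, z + (m - z) % (t i).toNat) := by
  refine ⟨(((m - z) / (t i).toNat : ℕ) : ℤ), ?_⟩
  show (g ^ (((m - z) / (t i).toNat : ℕ) : ℤ)) _ = _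
  rw [zpow_natCast, pow_apply h hti (Nat.le_add_right _ _)]
  have h2 : z + (m - z) % (t i).toNat + (m - z) / (t i).toNat * (t i).toNat = m := by
    rw [add_assoc, Nat.mod_add_div', Nat.add_sub_cancel' hm]
  rw [h2]

lemma orbit_infinite {g : Equiv.Perm (X n)} {t : Fin n → ℤ} {z : ℕ}
    (h : EvTransFrom g t z) {i : Fin n} (hti : 0 < t i) (r : ℕ) :
    (orbit g (i, z + r)).Infinite := by
  have hd : 0 < (t i).toNat := by omega
  refine Set.infinite_of_injective_forall_mem
    (f := fun k : ℕ => ((i, z + r + k * (t i).toNat) : X n)) ?_ ?_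
  · intro a b hab
    have h2 : z + r + a * (t i).toNat = z + r + b * (t i).toNat :=
      congrArg Prod.snd hab
    exact Nat.eq_of_mul_eq_mul_right hd (by omega)
  · intro k
    refine ⟨(k : ℤ), ?_⟩
    show (g ^ ((k : ℕ) : ℤ)) _ = _
    rw [zpow_natCast, pow_apply h hti (Nat.le_add_right _ _)]

lemma exists_pos_ray {g : Equiv.Perm (X n)} {t : Fin n → ℤ} {z : ℕ}
    (h : EvTransFrom g t z) {p : X n} (hinf : (orbit g p).Infinite) :
    ∃ (i : Fin n) (m : ℕ), z ≤ m ∧ 0 < t i ∧ (i, m) ∈ orbit g p := by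
  set w : ℕ := z + ∑ j, (t j).natAbs with hw
  have hwz : z ≤ w := Nat.le_add_right _ _
  -- injectivity of k ↦ g^k p
  have hinj : Function.Injective (fun k : ℤ => (g ^ k) p) := by
    by_contra hni
    simp only [Function.Injective, not_forall] at hni
    obtain ⟨a, b, hab, hne⟩ := hni
    have hper : ∀ e : ℤ, e ≠ 0 → (g ^ e) p = p → (orbit g p).Finite := by
      intro e he hfix
      have habs : ∀ k : ℤ, (g ^ k) p = (g ^ (k % e)) p := by
        intro k
        conv_lhs => rw [show k = k % e + e * (k / e) by rw [Int.emod_add_mul_ediv]]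
        rw [zpow_add, Equiv.Perm.mul_apply, zpow_mul,
          Equiv.Perm.zpow_apply_eq_self_of_apply_eq_self hfix]
      have hsub : orbit g p ⊆ (fun k : ℤ => (g ^ k) p) '' (Set.Icc (-(|e|)) |e|) := by
        rintro x ⟨k, rfl⟩
        refine ⟨k % e, ?_, (habs k).symm⟩
        have h1 := Int.emod_nonneg k he
        have h3 := Int.emod_lt k he
        have h4 := abs_nonneg e
        have h5 := le_abs_self e
        have h6 := neg_abs_le e
        simp only [Set.mem_Icc]
        omega
      exact ((Set.finite_Icc _ _).image _).subset hsub
    have he1 : (g ^ (b - a)) p = p := by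
      have h1 : (g ^ (-a)) ((g ^ a) p) = (g ^ (-a)) ((g ^ b) p) := by
        rw [show (g ^ a) p = (g ^ b) p from hab]
      rw [← Equiv.Perm.mul_apply, ← Equiv.Perm.mul_apply, ← zpow_add, ← zpow_add] at h1
      simpa [show -a + a = 0 by ring, show -a + b = b - a by ring] using h1.symm
    exact hinf (hper (b - a) (by omega) he1)
  -- exponents landing below w form a finite set
  have hSfin : {q : X n | q.2 < w}.Finite := by
    have hsub : {q : X n | q.2 < w} ⊆ Set.univ ×ˢ Set.Iio w := fun q hq => ⟨trivial, hq⟩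
    exact ((Set.finite_univ).prod (Set.finite_Iio w)).subset hsub
  have hKfin : {k : ℤ | ((g ^ k) p).2 < w}.Finite :=
    hSfin.preimage (hinj.injOn)
  obtain ⟨b, hb⟩ := hKfin.bddAbove
  have key : ∀ j : ℕ, w ≤ ((g ^ ((b + 1) + (j : ℤ))) p).2 := by
    intro j
    by_contra hlt
    have h1 : (b + 1) + (j : ℤ) ≤ b := hb (Nat.lt_of_not_le hlt : ((g ^ ((b + 1) + (j : ℤ))) p).2 < w)
    omega
  set k₀ : ℤ := b + 1 with hk₀
  obtain ⟨i, m, hq⟩ : ∃ i m, (g ^ k₀) p = (i, m) := ⟨_, _, rfl⟩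
  have hm : w ≤ m := by
    have := key 0
    rw [show k₀ + ((0 : ℕ) : ℤ) = k₀ by simp, hq] at this
    exact this
  rcases lt_trichotomy (t i) 0 with hti | hti | hti
  · -- negative ray: forward iterates descend forever, contradiction
    exfalso
    have hstep : ∀ j : ℕ, ∃ m' : ℕ, (g ^ (k₀ + (j : ℤ))) p = (i, m') ∧ (m' : ℤ) = m + j * t i := by
      intro j
      induction j with
      | zero => exact ⟨m, by simpa using hq, by simp⟩
      | succ j ih =>
        obtain ⟨m', hm', hval⟩ := ih
        have hm'w : w ≤ m' := by
          have := key j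
          rw [hm'] at this
          exact this
        obtain ⟨h1, h2⟩ := h i m' (by omega)
        refine ⟨(g (i, m')).2, ?_, ?_⟩
        · have hexp : (g ^ (k₀ + ((j + 1 : ℕ) : ℤ))) p = g ((g ^ (k₀ + (j : ℤ))) p) := by
            rw [show k₀ + ((j + 1 : ℕ) : ℤ) = 1 + (k₀ + (j : ℤ)) by push_cast; ring,
              zpow_add, zpow_one, Equiv.Perm.mul_apply]
          rw [hexp, hm']
          exact Prod.ext h1 rfl
        · have hc : ((j + 1 : ℕ) : ℤ) * t i = (j : ℤ) * t i + t i := by push_cast; ring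
          rw [hc]
          linarith [h2, hval]
    obtain ⟨m', _, hval⟩ := hstep (m + 1)
    have h1 : (0 : ℤ) ≤ (m' : ℤ) := Int.natCast_nonneg _
    have h2 : ((m + 1 : ℕ) : ℤ) * t i ≤ ((m + 1 : ℕ) : ℤ) * (-1) :=
      mul_le_mul_of_nonneg_left (by omega) (by positivity)
    push_cast at h2 hval
    linarith
  · -- zero ray: fixed point contradicts injectivity
    exfalso
    obtain ⟨h1, h2⟩ := h i m (by omega)
    have hfix : g (i, m) = (i, m) := Prod.ext h1 (by exact_mod_cast (by omega : ((g (i, m)).2 : ℤ) = (m : ℤ)))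
    have hnext : (g ^ (k₀ + 1)) p = (g ^ k₀) p := by
      rw [show k₀ + 1 = 1 + k₀ by ring, zpow_add, zpow_one, Equiv.Perm.mul_apply, hq, hfix]
    have := hinj hnext
    omega
  · exact ⟨i, m, by omega, hti, ⟨k₀, hq⟩⟩

lemma key_inj {g : Equiv.Perm (X n)} {t : Fin n → ℤ} {z : ℕ}
    (h : EvTransFrom g t z) {i j : Fin n} {r s : ℕ}
    (hr : r < (t i).toNat) (hs : s < (t j).toNat)
    (k : ℕ) (hk : (g ^ k) (i, z + r) = (j, z + s)) : i = j ∧ r = s := by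
  have hti : 0 < t i := by omega
  rw [pow_apply h hti (Nat.le_add_right _ _)] at hk
  have h1 : i = j := congrArg Prod.fst hk
  subst h1
  have h2 : z + r + k * (t i).toNat = z + s := congrArg Prod.snd hk
  refine ⟨rfl, ?_⟩
  rcases Nat.eq_zero_or_pos k with hk0 | hk0
  · subst hk0; omega
  · exfalso
    have h3 : (t i).toNat ≤ k * (t i).toNat := Nat.le_mul_of_pos_left _ hk0
    set K := k * (t i).toNat with hK
    omega

lemma count_aux (g : Equiv.Perm (X n)) (t : Fin n → ℤ) (z : ℕ)
    (h : EvTransFrom g t z) :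
    {A : Set (X n) | IsInfOrbit g A}.Finite ∧
      {A : Set (X n) | IsInfOrbit g A}.ncard = ∑ i, (t i).toNat := by
  classical
  set I : Finset ((_ : Fin n) × ℕ) :=
    Finset.univ.sigma (fun i => Finset.range (t i).toNat) with hI
  set f : ((_ : Fin n) × ℕ) → Set (X n) := fun x => orbit g (x.1, z + x.2) with hf
  have hmemI : ∀ x : (_ : Fin n) × ℕ, x ∈ I ↔ x.2 < (t x.1).toNat := by
    intro x
    simp [hI, Finset.mem_sigma]
  have hset : {A : Set (X n) | IsInfOrbit g A} = f '' ↑I := by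
    ext A
    simp only [Set.mem_setOf_eq, Set.mem_image, Finset.mem_coe]
    constructor
    · rintro ⟨⟨p, rfl⟩, hAinf⟩
      obtain ⟨i, m, hm, hti, hmem⟩ := exists_pos_ray h hAinf
      refine ⟨⟨i, (m - z) % (t i).toNat⟩, ?_, ?_⟩
      · rw [hmemI]
        exact Nat.mod_lt _ (by omega)
      · have h1 := mem_orbit_mod h hti hm
        calc f ⟨i, (m - z) % (t i).toNat⟩ = orbit g (i, z + (m - z) % (t i).toNat) := rfl
          _ = orbit g (i, m) := (orbit_eq_of_mem h1).symm
          _ = orbit g p := orbit_eq_of_mem hmem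
    · rintro ⟨⟨i, r⟩, hmem, rfl⟩
      rw [hmemI] at hmem
      have hti : 0 < t i := by simp only at hmem; omega
      exact ⟨⟨_, rfl⟩, orbit_infinite h hti r⟩
  have hinj : Set.InjOn f ↑I := by
    rintro ⟨i, r⟩ hir ⟨j, s⟩ hjs heq
    rw [Finset.mem_coe, hmemI] at hir hjs
    simp only at hir hjs
    have hmem : ((j, z + s) : X n) ∈ orbit g (i, z + r) := by
      rw [show orbit g (i, z + r) = f ⟨i, r⟩ from rfl, heq]
      exact mem_orbit_self _
    obtain ⟨k, hk0⟩ := hmem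
    have hk : (g ^ k) ((i, z + r) : X n) = (j, z + s) := hk0
    rcases le_or_gt 0 k with hkp | hkp
    · obtain ⟨k', rfl⟩ : ∃ k' : ℕ, (k' : ℤ) = k := ⟨k.toNat, by omega⟩
      rw [zpow_natCast] at hk
      obtain ⟨h1, h2⟩ := key_inj h hir hjs k' hk
      subst h1; subst h2; rfl
    · have hk' : (g ^ (-k)) ((j, z + s) : X n) = (i, z + r) := by
        rw [← hk, ← Equiv.Perm.mul_apply, ← zpow_add]
        simp
      obtain ⟨k', hke⟩ : ∃ k' : ℕ, (k' : ℤ) = -k := ⟨(-k).toNat, by omega⟩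
      rw [← hke, zpow_natCast] at hk'
      obtain ⟨h1, h2⟩ := key_inj h hjs hir k' hk'
      subst h1; subst h2; rfl
  constructor
  · rw [hset]
    exact I.finite_toSet.image f
  · rw [hset, Set.ncard_image_of_injOn hinj, Set.ncard_coe_finset, hI, Finset.card_sigma]
    simp

lemma orbit_inv (g : Equiv.Perm (X n)) (p : X n) : orbit g⁻¹ p = orbit g p := by
  ext q
  constructor
  · rintro ⟨k, rfl⟩
    refine ⟨-k, ?_⟩
    show (g ^ (-k)) p = (g⁻¹ ^ k) p
    rw [zpow_neg, ← inv_zpow]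
  · rintro ⟨k, rfl⟩
    refine ⟨-k, ?_⟩
    show (g⁻¹ ^ (-k)) p = (g ^ k) p
    rw [zpow_neg, inv_zpow, inv_inv]

end HoughtonAux

set_option linter.unusedVariables false in
theorem statement5 (n : ℕ) (hn : 2 ≤ n) (g : Equiv.Perm (X n)) (t : Fin n → ℤ)
    (hg : EvTrans g t) :
    {A : Set (X n) | IsInfOrbit g A}.Finite ∧
      2 * {A : Set (X n) | IsInfOrbit g A}.ncard = ∑ i : Fin n, (t i).natAbs := by
  obtain ⟨z, hz⟩ := hg
  obtain ⟨hfin, hcard⟩ := HoughtonAux.count_aux g t z hz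
  have hinv : EvTransFrom g⁻¹ (fun i => -(t i)) (z + ∑ j, (t j).natAbs) := by
    intro i m hm
    have hB : (t i).natAbs ≤ ∑ j, (t j).natAbs :=
      Finset.single_le_sum (f := fun j => (t j).natAbs) (fun _ _ => Nat.zero_le _)
        (Finset.mem_univ i)
    set m' : ℕ := ((m : ℤ) - t i).toNat with hm'
    have hm'1 : z ≤ m' := by omega
    have hm'2 : (m' : ℤ) = (m : ℤ) - t i := by omega
    obtain ⟨h1, h2⟩ := hz i m' hm'1
    have hgm : g (i, m') = (i, m) := by
      refine Prod.ext h1 ?_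
      exact_mod_cast (by omega : ((g (i, m')).2 : ℤ) = (m : ℤ))
    have hinvm : g⁻¹ (i, m) = (i, m') := by
      rw [← hgm]
      exact Equiv.symm_apply_apply g _
    rw [hinvm]
    refine ⟨rfl, ?_⟩
    show (m' : ℤ) = (m : ℤ) + -(t i)
    omega
  obtain ⟨hfin', hcard'⟩ := HoughtonAux.count_aux g⁻¹ (fun i => -(t i)) _ hinv
  have hsets : {A : Set (X n) | IsInfOrbit g⁻¹ A} = {A : Set (X n) | IsInfOrbit g A} := by
    ext A
    simp only [Set.mem_setOf_eq, IsInfOrbit, HoughtonAux.orbit_inv]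
  rw [hsets] at hcard'
  refine ⟨hfin, ?_⟩
  have hsum : ∑ i, (t i).natAbs = ∑ i, (t i).toNat + ∑ i, (-(t i)).toNat := by
    rw [← Finset.sum_add_distrib]
    exact Finset.sum_congr rfl fun i _ => by omega
  omega
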